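/- Under the setup of the identity between the lattice-sum and the supernomial sum (matrix 𝒜 of size d+2, vector N with associated L = N'T_{d+1} having all components L_i ≥ 0), suppose additionally the well-balanced conditions 2N_+ − N_{d−1} ≥ −(2p−d−2) and 2N_− − N_{d−1} ≥ −(2p−d−2) hold. Then in the sum Σ_{n ∈ ℤ^{d+2}} z^{n_+−n_−} q^{(1/2)n𝒜nᵀ} Π_a [e_a·(N+n−n𝒜), e_a·n]⁺_q, every nonzero summand has all coordinates n_a ≥ 0, so the extended q-binomials may be replaced by ordinary Gaussian binomials. -/

import Mathlib

noncomputable section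
open LaurentPolynomial

def gaussRec (v : LaurentPolynomial ℤ) : ℕ → ℕ → LaurentPolynomial ℤ
  | 0, 0 => 1
  | 0, _ + 1 => 0
  | _ + 1, 0 => 1
  | n + 1, m + 1 => gaussRec v n (m + 1) * v ^ (m + 1) + gaussRec v n m

/-- `[n m]_v` for integer indices: the Gaussian binomial in the variable `v`,
zero unless `0 ≤ m ≤ n`. -/
def gaussZ (v : LaurentPolynomial ℤ) (n m : ℤ) : LaurentPolynomial ℤ :=
  if 0 ≤ m ∧ m ≤ n then gaussRec v n.toNat m.toNat else 0

/-- The Gaussian binomial coefficient `[n m]_q` as a Laurent polynomial in `q = T 1`. -/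
def qbin (n m : ℤ) : LaurentPolynomial ℤ := gaussZ (T 1) n m

/-- The extended q-binomial coefficient `[n m]⁺_q ∈ ℤ[q,q⁻¹]`. -/
def qbinPlus (n m : ℤ) : LaurentPolynomial ℤ :=
  if 0 ≤ n then qbin n m
  else (-1) ^ (n - m).natAbs * T (-(((n - m) ^ 2 + (n - m)) / 2)) *
    gaussZ (T (-1)) (-m - 1) (-n - 1)


/-- The symmetric `(d+2) × (d+2)` matrix `𝒜`, with indices `0 ↦ +`, `1 ↦ −`,
`i+2 ↦ i` for `0 ≤ i ≤ d-1`. -/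
def Amat (p d : ℕ) : Matrix (Fin (d + 2)) (Fin (d + 2)) ℤ := fun i j =>
  if (i : ℕ) = 0 ∧ (j : ℕ) = 0 then (p : ℤ)
  else if (i : ℕ) = 1 ∧ (j : ℕ) = 1 then (p : ℤ)
  else if ((i : ℕ) = 0 ∧ (j : ℕ) = 1) ∨ ((i : ℕ) = 1 ∧ (j : ℕ) = 0) then -(p : ℤ) + d + 1
  else if (i : ℕ) ≤ 1 then (j : ℤ) - 1
  else if (j : ℕ) ≤ 1 then (i : ℤ) - 1
  else 2 * min ((i : ℤ) - 1) ((j : ℤ) - 1)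

/-- The tridiagonal matrix `T_m` with diagonal `(2, ..., 2, 1)` and `-1` on the
off-diagonals, so that `(T_m⁻¹)_{ij} = min(i,j)`. -/
def Tmat (m : ℕ) : Matrix (Fin m) (Fin m) ℤ := fun i j =>
  if i = j then (if (i : ℕ) = m - 1 then 1 else 2)
  else if (i : ℕ) + 1 = (j : ℕ) ∨ (j : ℕ) + 1 = (i : ℕ) then -1 else 0

/-- `N' = (N_0, ..., N_{d-1}, N_+ + N_-)`. -/
def Nprime (d : ℕ) (N : Fin (d + 2) → ℤ) : Fin (d + 1) → ℤ := fun i =>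
  if h : (i : ℕ) < d then N ⟨(i : ℕ) + 2, by omega⟩ else N 0 + N 1

/-- `L = N' T_{d+1}` (as a row vector times the matrix); `Lvec d N j` is `L_{j+1}`. -/
def Lvec (d : ℕ) (N : Fin (d + 2) → ℤ) : Fin (d + 1) → ℤ := fun j =>
  ∑ i, Nprime d N i * Tmat (d + 1) i j

/-- `(n𝒜)_a = Σ_j n_j 𝒜_{ja}`. -/
def rowA (p d : ℕ) (n : Fin (d + 2) → ℤ) (a : Fin (d + 2)) : ℤ :=
  ∑ j, n j * Amat p d j a

/-- `P_N(n) = Π_{a ∈ I} [e_a·(N + n − n𝒜), e_a·n]⁺_q`. -/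
def Pfun (p d : ℕ) (N n : Fin (d + 2) → ℤ) : LaurentPolynomial ℤ :=
  ∏ a, qbinPlus (N a + n a - rowA p d n a) (n a)


/-! ### Auxiliary lemmas -/

lemma gaussZ_ne_zero' {v : LaurentPolynomial ℤ} {n m : ℤ} (h : gaussZ v n m ≠ 0) :
    0 ≤ m ∧ m ≤ n := by
  by_contra hc
  exact h (by rw [gaussZ, if_neg hc])

lemma qbinPlus_ne_zero' {A B : ℤ} (h : qbinPlus A B ≠ 0) : B ≤ A ∧ (B < 0 → A < 0) := by
  unfold qbinPlus at h
  split at h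
  · have := gaussZ_ne_zero' h
    exact ⟨this.2, fun hB => absurd this.1 (by omega)⟩
  · rename_i hA
    have h3 : gaussZ (T (-1)) (-B - 1) (-A - 1) ≠ 0 := by
      intro h0; exact h (by rw [h0, mul_zero])
    have := gaussZ_ne_zero' h3
    exact ⟨by omega, fun _ => by omega⟩

lemma tri_sum' {d : ℕ} (g : Fin (d + 1) → ℤ) (G : ℕ → ℤ)
    (hG : ∀ t (h : t < d + 1), G t = g ⟨t, h⟩) (hG1 : G (d + 1) = 0) (j : Fin (d + 1)) :
    ∑ i, g i * Tmat (d + 1) i j =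
      (if (j : ℕ) = d then 1 else 2) * G j
        - (if (j : ℕ) = 0 then 0 else G ((j : ℕ) - 1)) - G ((j : ℕ) + 1) := by
  have key : ∀ i : Fin (d + 1), g i * Tmat (d + 1) i j =
      (if i = j then (if (j : ℕ) = d then 1 else 2) * g i else 0)
        - (if (i : ℕ) + 1 = (j : ℕ) then g i else 0)
        - (if (i : ℕ) = (j : ℕ) + 1 then g i else 0) := by
    intro i
    unfold Tmat
    simp only [Fin.ext_iff]
    split_ifs <;> first | ring1 | (exfalso; omega)
  rw [Finset.sum_congr rfl fun i _ => key i, Finset.sum_sub_distrib, Finset.sum_sub_distrib]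
  have S1 : ∑ i : Fin (d+1), (if i = j then (if (j : ℕ) = d then 1 else 2) * g i else 0)
      = (if (j : ℕ) = d then 1 else 2) * G j := by
    rw [Finset.sum_ite_eq' Finset.univ j (fun i => (if (j : ℕ) = d then 1 else 2) * g i)]
    simp [hG j.1 j.2]
  have S2 : ∑ i : Fin (d+1), (if (i : ℕ) + 1 = (j : ℕ) then g i else 0)
      = (if (j : ℕ) = 0 then 0 else G ((j : ℕ) - 1)) := by
    by_cases hj0 : (j : ℕ) = 0
    · rw [if_pos hj0]
      apply Finset.sum_eq_zero
      intro i _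
      rw [if_neg (by omega)]
    · rw [if_neg hj0]
      have he : ∀ i : Fin (d+1), ((i : ℕ) + 1 = (j : ℕ)) ↔ (i = (⟨(j:ℕ) - 1, by omega⟩ : Fin (d+1))) := by
        intro i; rw [Fin.ext_iff]; constructor <;> (intro; simp_all [-Fin.val_eq_zero_iff]; omega)
      calc ∑ i : Fin (d+1), (if (i : ℕ) + 1 = (j : ℕ) then g i else 0)
          = ∑ i : Fin (d+1), (if i = (⟨(j:ℕ) - 1, by omega⟩ : Fin (d+1)) then g i else 0) :=
            Finset.sum_congr rfl fun i _ => by simp only [he i]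
        _ = g ⟨(j:ℕ) - 1, by omega⟩ := by
            rw [Finset.sum_ite_eq' Finset.univ _ g]; simp
        _ = G ((j : ℕ) - 1) := (hG _ _).symm
  have S3 : ∑ i : Fin (d+1), (if (i : ℕ) = (j : ℕ) + 1 then g i else 0) = G ((j : ℕ) + 1) := by
    by_cases hjd : (j : ℕ) = d
    · rw [hjd, hG1]
      apply Finset.sum_eq_zero
      intro i _
      rw [if_neg (by omega)]
    · have he : ∀ i : Fin (d+1), ((i : ℕ) = (j : ℕ) + 1) ↔ (i = (⟨(j:ℕ) + 1, by omega⟩ : Fin (d+1))) := by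
        intro i; rw [Fin.ext_iff]
      calc ∑ i : Fin (d+1), (if (i : ℕ) = (j : ℕ) + 1 then g i else 0)
          = ∑ i : Fin (d+1), (if i = (⟨(j:ℕ) + 1, by omega⟩ : Fin (d+1)) then g i else 0) :=
            Finset.sum_congr rfl fun i _ => by simp only [he i]
        _ = g ⟨(j:ℕ) + 1, by omega⟩ := by
            rw [Finset.sum_ite_eq' Finset.univ _ g]; simp
        _ = G ((j : ℕ) + 1) := (hG _ _).symm
  rw [S1, S2, S3]

/-- Column of `Amat` (through the reindexing `t ↦ t+2`, with the last column the
sum of columns `+` and `−`), padded by zero. -/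
def CA (p d : ℕ) : ℕ → Fin (d + 2) → ℤ := fun t a =>
  if h : t < d then Amat p d a ⟨t + 2, by omega⟩
  else if t = d then Amat p d a 0 + Amat p d a 1 else 0

/-- `rowA` through the reindexing, padded by zero. -/
def FPad (p d : ℕ) (n : Fin (d + 2) → ℤ) : ℕ → ℤ := fun t =>
  if h : t < d then rowA p d n ⟨t + 2, by omega⟩
  else if t = d then rowA p d n 0 + rowA p d n 1 else 0

/-- `Nprime` as a function of a natural index, padded by zero. -/
def NPad (d : ℕ) (N : Fin (d + 2) → ℤ) : ℕ → ℤ := fun t =>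
  if h : t < d then N ⟨t + 2, by omega⟩ else if t = d then N 0 + N 1 else 0

lemma FPad_eq (p d : ℕ) (n : Fin (d + 2) → ℤ) (t : ℕ) :
    FPad p d n t = ∑ a, n a * CA p d t a := by
  unfold FPad CA rowA
  split_ifs with h1 h2
  · rfl
  · rw [← Finset.sum_add_distrib]
    exact Finset.sum_congr rfl fun a _ => by ring
  · simp

lemma CA_low (p d : ℕ) (hd1 : 1 ≤ d) (t : ℕ) (ht : t ≤ d) (a : Fin (d + 2)) (ha : (a : ℕ) ≤ 1) :
    CA p d t a = (t : ℤ) + 1 := by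
  have hav := a.isLt
  unfold CA Amat
  split_ifs <;> simp_all [-Fin.val_eq_zero_iff] <;> omega

lemma CA_high (p d : ℕ) (t : ℕ) (ht : t ≤ d) (a : Fin (d + 2)) (ha : 2 ≤ (a : ℕ)) :
    CA p d t a = 2 * min ((a : ℤ) - 1) ((t : ℤ) + 1) := by
  have hav := a.isLt
  unfold CA Amat
  split_ifs <;> simp_all <;> omega

lemma CA_top (p d : ℕ) (a : Fin (d + 2)) : CA p d (d + 1) a = 0 := by
  unfold CA
  rw [dif_neg (by omega), if_neg (by omega)]

lemma sum_delta {k : ℕ} (n : Fin k → ℤ) (c : Fin k) (e : ℤ) :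
    ∑ a, n a * (if (a : ℕ) = (c : ℕ) then e else 0) = n c * e := by
  have he : ∀ a : Fin k, ((a : ℕ) = (c : ℕ)) ↔ (a = c) := fun a => (Fin.ext_iff).symm
  calc ∑ a, n a * (if (a : ℕ) = (c : ℕ) then e else 0)
      = ∑ a, (if a = c then n a * e else 0) := by
        refine Finset.sum_congr rfl fun a _ => ?_
        simp only [he a, mul_ite, mul_zero]
    _ = n c * e := by rw [Finset.sum_ite_eq' Finset.univ c (fun a => n a * e)]; simp

lemma FP_comb_lt (p d : ℕ) (hd1 : 1 ≤ d) (n : Fin (d + 2) → ℤ) (t : ℕ) (ht : t < d) :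
    2 * FPad p d n t - (if t = 0 then 0 else FPad p d n (t - 1)) - FPad p d n (t + 1)
      = 2 * n ⟨t + 2, by omega⟩ := by
  have hcoef : ∀ a : Fin (d + 2),
      2 * CA p d t a - (if t = 0 then 0 else CA p d (t - 1) a) - CA p d (t + 1) a
        = if (a : ℕ) = ((⟨t + 2, by omega⟩ : Fin (d + 2)) : ℕ) then 2 else 0 := by
    intro a
    have hav := a.isLt
    by_cases hlow : (a : ℕ) ≤ 1
    · rw [CA_low p d hd1 t (by omega) a hlow, CA_low p d hd1 (t+1) (by omega) a hlow]
      by_cases ht0 : t = 0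
      · rw [if_pos ht0, if_neg (by simp; omega)]
        push_cast; omega
      · rw [if_neg ht0, CA_low p d hd1 (t-1) (by omega) a hlow, if_neg (by simp; omega)]
        push_cast; omega
    · rw [CA_high p d t (by omega) a (by omega), CA_high p d (t+1) (by omega) a (by omega)]
      by_cases ht0 : t = 0
      · rw [if_pos ht0]
        simp only [Fin.val_mk]
        split_ifs <;> push_cast <;> omega
      · rw [if_neg ht0, CA_high p d (t-1) (by omega) a (by omega)]
        simp only [Fin.val_mk]
        split_ifs <;> push_cast <;> omega
  have hmask : (if t = 0 then 0 else FPad p d n (t - 1))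
      = ∑ a, n a * (if t = 0 then 0 else CA p d (t - 1) a) := by
    split_ifs
    · simp
    · exact FPad_eq p d n (t - 1)
  rw [FPad_eq p d n t, FPad_eq p d n (t+1), hmask, Finset.mul_sum,
    ← Finset.sum_sub_distrib, ← Finset.sum_sub_distrib]
  have hstep : ∀ a ∈ Finset.univ, (2 * (n a * CA p d t a) - n a * (if t = 0 then 0 else CA p d (t - 1) a)) - n a * CA p d (t+1) a
      = n a * (if (a : ℕ) = ((⟨t + 2, by omega⟩ : Fin (d + 2)) : ℕ) then 2 else 0) := by
    intro a _
    rw [← hcoef a]; ring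
  rw [Finset.sum_congr rfl hstep, sum_delta n (⟨t + 2, by omega⟩ : Fin (d + 2)) 2, mul_comm]

lemma FP_comb_top (p d : ℕ) (hd1 : 1 ≤ d) (n : Fin (d + 2) → ℤ) :
    FPad p d n d - FPad p d n (d - 1) - FPad p d n (d + 1) = n 0 + n 1 := by
  have hcoef : ∀ a : Fin (d + 2),
      CA p d d a - CA p d (d - 1) a - CA p d (d + 1) a
        = (if (a : ℕ) = ((0 : Fin (d+2)) : ℕ) then 1 else 0)
          + (if (a : ℕ) = ((1 : Fin (d+2)) : ℕ) then 1 else 0) := by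
    intro a
    have hav := a.isLt
    rw [CA_top]
    by_cases hlow : (a : ℕ) ≤ 1
    · rw [CA_low p d hd1 d (by omega) a hlow, CA_low p d hd1 (d-1) (by omega) a hlow]
      simp only [Fin.val_zero, Fin.val_one]
      split_ifs <;> push_cast <;> omega
    · rw [CA_high p d d (by omega) a (by omega), CA_high p d (d-1) (by omega) a (by omega)]
      simp only [Fin.val_zero, Fin.val_one]
      split_ifs <;> push_cast <;> omega
  rw [FPad_eq p d n d, FPad_eq p d n (d-1), FPad_eq p d n (d+1),
    ← Finset.sum_sub_distrib, ← Finset.sum_sub_distrib]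
  have hstep : ∀ a ∈ Finset.univ, (n a * CA p d d a - n a * CA p d (d-1) a) - n a * CA p d (d+1) a
      = n a * (if (a : ℕ) = ((0 : Fin (d+2)) : ℕ) then 1 else 0)
        + n a * (if (a : ℕ) = ((1 : Fin (d+2)) : ℕ) then 1 else 0) := by
    intro a _
    rw [show (n a * CA p d d a - n a * CA p d (d-1) a) - n a * CA p d (d+1) a
        = n a * (CA p d d a - CA p d (d - 1) a - CA p d (d + 1) a) from by ring, hcoef a]
    ring
  rw [Finset.sum_congr rfl hstep, Finset.sum_add_distrib, sum_delta n 0 1, sum_delta n 1 1]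
  ring

lemma wb_id0 (p d : ℕ) (hp : 2 ≤ p) (hd1 : 1 ≤ d) (n : Fin (d + 2) → ℤ) :
    2 * rowA p d n 0 - rowA p d n ⟨d + 1, Nat.lt_succ_self _⟩
      = (2 * (p:ℤ) - d) * n 0 + (-(2 * (p:ℤ)) + d + 2) * n 1 := by
  have hcoef : ∀ a : Fin (d + 2),
      2 * Amat p d a 0 - Amat p d a ⟨d + 1, Nat.lt_succ_self _⟩
        = (if (a : ℕ) = ((0 : Fin (d+2)) : ℕ) then 2 * (p:ℤ) - d else 0)
          + (if (a : ℕ) = ((1 : Fin (d+2)) : ℕ) then -(2 * (p:ℤ)) + d + 2 else 0) := by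
    intro a
    have hav := a.isLt
    unfold Amat
    simp only [Fin.val_mk, Fin.val_zero, Fin.val_one, Nat.zero_le, if_true]
    split_ifs <;>
      (try simp only [and_true, and_false, true_and, false_and, or_false, false_or] at *) <;>
      omega
  unfold rowA
  rw [Finset.mul_sum, ← Finset.sum_sub_distrib]
  have hstep : ∀ a ∈ Finset.univ, 2 * (n a * Amat p d a 0) - n a * Amat p d a ⟨d + 1, Nat.lt_succ_self _⟩
      = n a * (if (a : ℕ) = ((0 : Fin (d+2)) : ℕ) then 2 * (p:ℤ) - d else 0)
        + n a * (if (a : ℕ) = ((1 : Fin (d+2)) : ℕ) then -(2 * (p:ℤ)) + d + 2 else 0) := by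
    intro a _
    rw [show 2 * (n a * Amat p d a 0) - n a * Amat p d a ⟨d + 1, Nat.lt_succ_self _⟩
        = n a * (2 * Amat p d a 0 - Amat p d a ⟨d + 1, Nat.lt_succ_self _⟩) from by ring, hcoef a]
    ring
  rw [Finset.sum_congr rfl hstep, Finset.sum_add_distrib, sum_delta, sum_delta]
  ring

lemma wb_id1 (p d : ℕ) (hp : 2 ≤ p) (hd1 : 1 ≤ d) (n : Fin (d + 2) → ℤ) :
    2 * rowA p d n 1 - rowA p d n ⟨d + 1, Nat.lt_succ_self _⟩
      = (2 * (p:ℤ) - d) * n 1 + (-(2 * (p:ℤ)) + d + 2) * n 0 := by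
  have hcoef : ∀ a : Fin (d + 2),
      2 * Amat p d a 1 - Amat p d a ⟨d + 1, Nat.lt_succ_self _⟩
        = (if (a : ℕ) = ((1 : Fin (d+2)) : ℕ) then 2 * (p:ℤ) - d else 0)
          + (if (a : ℕ) = ((0 : Fin (d+2)) : ℕ) then -(2 * (p:ℤ)) + d + 2 else 0) := by
    intro a
    have hav := a.isLt
    unfold Amat
    simp only [Fin.val_mk, Fin.val_zero, Fin.val_one]
    split_ifs <;>
      (try simp only [and_true, and_false, true_and, false_and, or_false, false_or] at *) <;>
      omega
  unfold rowA
  rw [Finset.mul_sum, ← Finset.sum_sub_distrib]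
  have hstep : ∀ a ∈ Finset.univ, 2 * (n a * Amat p d a 1) - n a * Amat p d a ⟨d + 1, Nat.lt_succ_self _⟩
      = n a * (if (a : ℕ) = ((1 : Fin (d+2)) : ℕ) then 2 * (p:ℤ) - d else 0)
        + n a * (if (a : ℕ) = ((0 : Fin (d+2)) : ℕ) then -(2 * (p:ℤ)) + d + 2 else 0) := by
    intro a _
    rw [show 2 * (n a * Amat p d a 1) - n a * Amat p d a ⟨d + 1, Nat.lt_succ_self _⟩
        = n a * (2 * Amat p d a 1 - Amat p d a ⟨d + 1, Nat.lt_succ_self _⟩) from by ring, hcoef a]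
    ring
  rw [Finset.sum_congr rfl hstep, Finset.sum_add_distrib, sum_delta, sum_delta]
  ring

lemma NPad_eq (d : ℕ) (N : Fin (d + 2) → ℤ) : ∀ t (h : t < d + 1),
    NPad d N t = Nprime d N ⟨t, h⟩ := by
  intro t h
  unfold NPad Nprime
  simp only [Fin.val_mk]
  split_ifs <;> first | rfl | (exfalso; omega)

lemma NPad_top (d : ℕ) (N : Fin (d + 2) → ℤ) : NPad d N (d + 1) = 0 := by
  unfold NPad
  rw [dif_neg (by omega), if_neg (by omega)]

lemma lvec_eval (d : ℕ) (N : Fin (d + 2) → ℤ) (t : ℕ) (ht : t < d + 1) :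
    Lvec d N ⟨t, ht⟩ = (if t = d then 1 else 2) * NPad d N t
      - (if t = 0 then 0 else NPad d N (t - 1)) - NPad d N (t + 1) := by
  have h := tri_sum' (Nprime d N) (NPad d N)
    (NPad_eq d N) (NPad_top d N) ⟨t, ht⟩
  exact h

lemma slack_nonneg (p d : ℕ) (N n : Fin (d + 2) → ℤ)
    (hM : ∀ b, 0 ≤ N b - rowA p d n b) :
    ∀ t, t ≤ d → 0 ≤ NPad d N t - FPad p d n t := by
  intro t ht
  by_cases h : t < d
  · have e1 : NPad d N t = N ⟨t + 2, by omega⟩ := by unfold NPad; rw [dif_pos h]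
    have e2 : FPad p d n t = rowA p d n ⟨t + 2, by omega⟩ := by unfold FPad; rw [dif_pos h]
    rw [e1, e2]; exact hM _
  · have htd : t = d := by omega
    rw [htd]
    have e1 : NPad d N d = N 0 + N 1 := by unfold NPad; rw [dif_neg (by omega), if_pos rfl]
    have e2 : FPad p d n d = rowA p d n 0 + rowA p d n 1 := by
      unfold FPad; rw [dif_neg (by omega), if_pos rfl]
    rw [e1, e2]
    have := hM 0; have := hM 1; linarith

lemma FPad_top (p d : ℕ) (n : Fin (d + 2) → ℤ) : FPad p d n (d + 1) = 0 := by
  unfold FPad; rw [dif_neg (by omega), if_neg (by omega)]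

set_option maxHeartbeats 1000000 in
lemma keyA_aux (p d : ℕ) (hd1 : 1 ≤ d) (N n : Fin (d + 2) → ℤ)
    (hL : ∀ j, 0 ≤ Lvec d N j)
    (hM : ∀ b, 0 ≤ N b - rowA p d n b)
    (hMneg : ∀ b, n b < 0 → N b + n b - rowA p d n b < 0) :
    ∀ (t : ℕ) (h : t < d), 0 ≤ n ⟨t + 2, by omega⟩ := by
  have hMP := slack_nonneg p d N n hM
  intro t ht
  by_contra hneg
  push_neg at hneg
  have hLj := hL ⟨t, by omega⟩
  rw [lvec_eval d N t (by omega), if_neg (show ¬ t = d by omega)] at hLj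
  have hcomb := FP_comb_lt p d hd1 n t ht
  have hslack : NPad d N t - FPad p d n t + n ⟨t + 2, by omega⟩ < 0 := by
    have e1 : NPad d N t = N ⟨t + 2, by omega⟩ := by unfold NPad; rw [dif_pos ht]
    have e2 : FPad p d n t = rowA p d n ⟨t + 2, by omega⟩ := by unfold FPad; rw [dif_pos ht]
    rw [e1, e2]
    have := hMneg ⟨t + 2, by omega⟩ hneg
    linarith
  have h3 : 0 ≤ NPad d N (t + 1) - FPad p d n (t + 1) := hMP (t + 1) (by omega)
  by_cases ht0 : t = 0
  · rw [if_pos ht0] at hLj hcomb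
    linarith
  · rw [if_neg ht0] at hLj hcomb
    have h4 : 0 ≤ NPad d N (t - 1) - FPad p d n (t - 1) := hMP (t - 1) (by omega)
    linarith

set_option maxHeartbeats 1000000 in
lemma keyBC_aux (p d : ℕ) (hp : 2 ≤ p) (hd : d < 2 * p - 2) (hd1 : 1 ≤ d)
    (N n : Fin (d + 2) → ℤ) (hL : ∀ j, 0 ≤ Lvec d N j)
    (hwb1 : 2 * N 0 - N ⟨d + 1, Nat.lt_succ_self _⟩ ≥ -(2 * (p : ℤ) - d - 2))
    (hwb2 : 2 * N 1 - N ⟨d + 1, Nat.lt_succ_self _⟩ ≥ -(2 * (p : ℤ) - d - 2))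
    (hM : ∀ b, 0 ≤ N b - rowA p d n b)
    (hMneg : ∀ b, n b < 0 → N b + n b - rowA p d n b < 0) :
    0 ≤ n 0 ∧ 0 ≤ n 1 := by
  have hq : (1 : ℤ) ≤ 2 * (p : ℤ) - d - 2 := by omega
  have hMd1 := hM ⟨d + 1, Nat.lt_succ_self _⟩
  have hLd := hL ⟨d, by omega⟩
  rw [lvec_eval d N d (by omega), if_pos rfl, if_neg (by omega)] at hLd
  have hcombT := FP_comb_top p d hd1 n
  have eN : NPad d N d = N 0 + N 1 := by
    unfold NPad; rw [dif_neg (by omega), if_pos rfl]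
  have eN1 : NPad d N (d - 1) = N ⟨d + 1, Nat.lt_succ_self _⟩ := by
    unfold NPad; rw [dif_pos (by omega)]
    congr 1
    exact Fin.ext (by simp; omega)
  have eF : FPad p d n d = rowA p d n 0 + rowA p d n 1 := by
    unfold FPad; rw [dif_neg (by omega), if_pos rfl]
  have eF1 : FPad p d n (d - 1) = rowA p d n ⟨d + 1, Nat.lt_succ_self _⟩ := by
    unfold FPad; rw [dif_pos (by omega)]
    congr 1
    exact Fin.ext (by simp; omega)
  rw [eN, eN1, NPad_top] at hLd
  rw [eF, eF1, FPad_top] at hcombT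
  have keyB : 0 ≤ n 0 := by
    by_contra hneg
    push_neg at hneg
    have hg0 := hMneg 0 hneg
    have e3 := wb_id0 p d hp hd1 n
    have hx : 2 ≤ (2 * (p : ℤ) - d - 2) * (n 0 - n 1 + 1) := by
      have hKx : (2 * (p : ℤ) - d - 2) * (n 0 - n 1 + 1)
          = (2 * N 0 - N ⟨d + 1, Nat.lt_succ_self _⟩) - 2 * (N 0 + n 0 - rowA p d n 0)
            + (N ⟨d + 1, Nat.lt_succ_self _⟩ - rowA p d n ⟨d + 1, Nat.lt_succ_self _⟩) + (2 * (p : ℤ) - d - 2) := by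
        linear_combination -e3
      rw [hKx]
      linarith [hwb1, hg0, hMd1]
    have hn1 : n 1 ≤ n 0 := by nlinarith [hx, hq]
    have hneg1 : n 1 < 0 := by omega
    have hg1 := hMneg 1 hneg1
    linarith [hLd, hcombT, hg0, hg1, hMd1]
  refine ⟨keyB, ?_⟩
  by_contra hneg
  push_neg at hneg
  have hg1 := hMneg 1 hneg
  have e4 := wb_id1 p d hp hd1 n
  have hx : 2 ≤ (2 * (p : ℤ) - d - 2) * (n 1 - n 0 + 1) := by
    have hKx : (2 * (p : ℤ) - d - 2) * (n 1 - n 0 + 1)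
        = (2 * N 1 - N ⟨d + 1, Nat.lt_succ_self _⟩) - 2 * (N 1 + n 1 - rowA p d n 1)
          + (N ⟨d + 1, Nat.lt_succ_self _⟩ - rowA p d n ⟨d + 1, Nat.lt_succ_self _⟩) + (2 * (p : ℤ) - d - 2) := by
      linear_combination -e4
    rw [hKx]
    linarith [hwb2, hg1, hMd1]
  have hn0 : n 0 ≤ n 1 := by nlinarith [hx, hq]
  linarith [keyB, hn0, hneg]

set_option maxHeartbeats 1000000 in
/-- under `L_i ≥ 0` and the well-balanced conditions, every nonzero
summand of the lattice sum has all coordinates `n_a ≥ 0`. -/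
theorem wellbalanced_nonneg (p d : ℕ) (hp : 2 ≤ p) (hd : d < 2 * p - 2) (hd1 : 1 ≤ d)
    (N : Fin (d + 2) → ℤ) (hL : ∀ j, 0 ≤ Lvec d N j)
    (hwb1 : 2 * N 0 - N ⟨d + 1, by omega⟩ ≥ -(2 * (p : ℤ) - d - 2))
    (hwb2 : 2 * N 1 - N ⟨d + 1, by omega⟩ ≥ -(2 * (p : ℤ) - d - 2)) :
    ∀ n : Fin (d + 2) → ℤ, Pfun p d N n ≠ 0 → ∀ a, 0 ≤ n a := by
  intro n hP
  have hfac : ∀ b, qbinPlus (N b + n b - rowA p d n b) (n b) ≠ 0 := fun b hb0 =>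
    hP (Finset.prod_eq_zero (Finset.mem_univ b) hb0)
  have hM : ∀ b, 0 ≤ N b - rowA p d n b := by
    intro b
    have h := (qbinPlus_ne_zero' (hfac b)).1
    linarith
  have hMneg : ∀ b, n b < 0 → N b + n b - rowA p d n b < 0 := fun b hb =>
    (qbinPlus_ne_zero' (hfac b)).2 hb
  have hBC := keyBC_aux p d hp hd hd1 N n hL hwb1 hwb2 hM hMneg
  intro a
  have hav := a.isLt
  by_cases h0 : (a : ℕ) = 0
  · have ha : a = 0 := Fin.ext (by simp [h0])
    rw [ha]; exact hBC.1
  · by_cases h1 : (a : ℕ) = 1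
    · have ha : a = 1 := Fin.ext (by simp [h1])
      rw [ha]; exact hBC.2
    · have h2 : (a : ℕ) - 2 < d := by omega
      have hk := keyA_aux p d hd1 N n hL hM hMneg ((a : ℕ) - 2) h2
      have he : (⟨(a : ℕ) - 2 + 2, by omega⟩ : Fin (d + 2)) = a := Fin.ext (by simp; omega)
      rwa [he] at hk

end
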